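/- (Jacobi triple product / theta function expansion) For a nonzero complex z and q with 0 < |q| < 1: (z;q)_∞ (q/z;q)_∞ (q;q)_∞ = ∑_{n=-∞}^{∞} (-1)^n q^{n(n-1)/2} z^n. -/

import Mathlib

open Finset Filter Topology

namespace JTP

variable {q z : ℂ}




variable (q z : ℂ)

noncomputable def Q (m : ℕ) : ℂ := ∏ j ∈ Finset.range m, (1 - q * q ^ j)

lemma Q_zero : Q q 0 = 1 := by simp [Q]

lemma Q_succ (m : ℕ) : Q q (m + 1) = Q q m * (1 - q * q ^ m) := by
  simp [Q, Finset.prod_range_succ]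

lemma Q_succ' (m : ℕ) : Q q (m + 1) = Q q m * (1 - q ^ (m + 1)) := by
  rw [Q_succ, pow_succ, mul_comm (q ^ m) q]

variable {q z}

lemma one_sub_pow_ne (hq : ‖q‖ < 1) {m : ℕ} (hm : 1 ≤ m) :
    (1 : ℂ) - q ^ m ≠ 0 := by
  intro h
  have h1 : ‖q ^ m‖ < 1 := by
    rw [norm_pow]
    exact pow_lt_one₀ (norm_nonneg q) hq (by omega)
  have h2 : q ^ m = 1 := by linear_combination -h
  rw [h2] at h1; simp at h1

lemma factor_ne_zero (hq : ‖q‖ < 1) (j : ℕ) : (1 : ℂ) - q * q ^ j ≠ 0 := by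
  have := one_sub_pow_ne hq (m := j + 1) (by omega)
  rwa [pow_succ, mul_comm (q ^ j) q] at this

lemma Q_ne_zero (hq : ‖q‖ < 1) (m : ℕ) : Q q m ≠ 0 :=
  Finset.prod_ne_zero_iff.2 fun j _ => factor_ne_zero hq j

lemma Q_two_step {m : ℕ} (hm : 1 ≤ m) :
    Q q (m + 1) = Q q (m - 1) * ((1 - q ^ m) * (1 - q ^ (m + 1))) := by
  obtain ⟨k, rfl⟩ : ∃ k, m = k + 1 := ⟨m - 1, by omega⟩
  rw [Q_succ' q (k + 1), Q_succ' q k]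
  simp only [Nat.add_sub_cancel]
  ring

lemma key_identity (a b : ℕ) :
    (1 - q ^ (a + b + 1)) * (1 - q ^ (a + b + 2)) =
      (1 + q ^ (a + b + 1)) * (1 - q ^ (a + 1)) * (1 - q ^ (b + 1)) +
        q ^ (b + 1) * ((1 - q ^ a) * (1 - q ^ (a + 1))) +
        q ^ (a + 1) * ((1 - q ^ b) * (1 - q ^ (b + 1))) := by
  simp only [pow_add, pow_succ, pow_zero]
  ring

variable (q) in
noncomputable def B (N : ℕ) (n : ℤ) : ℂ :=
  if n.natAbs ≤ N then Q q (2 * N) / (Q q (N + n).toNat * Q q (N - n).toNat) else 0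

lemma B_eq_zero {N : ℕ} {n : ℤ} (h : N < n.natAbs) : B q N n = 0 := by
  rw [B, if_neg (by omega)]

lemma B_eq {N : ℕ} {n : ℤ} (h : n.natAbs ≤ N) :
    B q N n = Q q (2 * N) / (Q q (N + n).toNat * Q q (N - n).toNat) := by
  rw [B, if_pos h]

lemma B_top_int (hq : ‖q‖ < 1) {N : ℕ} {n : ℤ} (h : n = (N : ℤ)) :
    B q N n = 1 := by
  rw [B_eq (by omega), show ((N : ℤ) + n).toNat = 2 * N by omega,
    show ((N : ℤ) - n).toNat = 0 by omega, Q_zero, mul_one,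
    div_self (Q_ne_zero hq _)]

lemma B_bot_int (hq : ‖q‖ < 1) {N : ℕ} {n : ℤ} (h : n = -(N : ℤ)) :
    B q N n = 1 := by
  rw [B_eq (by omega), show ((N : ℤ) + n).toNat = 0 by omega,
    show ((N : ℤ) - n).toNat = 2 * N by omega, Q_zero, one_mul,
    div_self (Q_ne_zero hq _)]

/-- The recurrence for B. -/
lemma B_rec (hq0 : q ≠ 0) (hq : ‖q‖ < 1) (N : ℕ) (n : ℤ) :
    B q (N + 1) n = (1 + q ^ (2 * N + 1)) * B q N n
      + q ^ ((N : ℤ) + 1 - n) * B q N (n - 1) + q ^ ((N : ℤ) + 1 + n) * B q N (n + 1) := by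
  rcases lt_trichotomy (n.natAbs : ℤ) (N + 1) with hlt | heq | hgt
  · -- |n| ≤ N : the main case
    have hn : n.natAbs ≤ N := by omega
    set a : ℕ := (N + n).toNat with ha
    set b : ℕ := (N - n).toNat with hb
    have hab : a + b = 2 * N := by omega
    have hz1 : q ^ ((N : ℤ) + 1 - n) = q ^ (b + 1) := by
      rw [show (N : ℤ) + 1 - n = ((b + 1 : ℕ) : ℤ) by omega, zpow_natCast]
    have hz2 : q ^ ((N : ℤ) + 1 + n) = q ^ (a + 1) := by
      rw [show (N : ℤ) + 1 + n = ((a + 1 : ℕ) : ℤ) by omega, zpow_natCast]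
    have nza := Q_ne_zero hq a
    have nzb := Q_ne_zero hq b
    have hA1 : (1 : ℂ) - q ^ (a + 1) ≠ 0 := one_sub_pow_ne hq (by omega)
    have hB1 : (1 : ℂ) - q ^ (b + 1) ≠ 0 := one_sub_pow_ne hq (by omega)
    set D : ℂ := Q q (a + b) / (Q q a * Q q b * ((1 - q ^ (a + 1)) * (1 - q ^ (b + 1))))
      with hD
    have hQa1 : Q q (a + 1) = Q q a * (1 - q ^ (a + 1)) := Q_succ' q a
    have hQb1 : Q q (b + 1) = Q q b * (1 - q ^ (b + 1)) := Q_succ' q b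
    have lhs_eq : B q (N + 1) n = (1 - q ^ (a + b + 1)) * (1 - q ^ (a + b + 2)) * D := by
      rw [B_eq (by omega), show 2 * (N + 1) = (a + b + 1) + 1 by omega,
        show (((N + 1 : ℕ) : ℤ) + n).toNat = a + 1 by omega,
        show (((N + 1 : ℕ) : ℤ) - n).toNat = b + 1 by omega,
        Q_succ' q (a + b + 1), Q_succ' q (a + b), hQa1, hQb1, hD]
      field_simp
    have t1 : (1 + q ^ (2 * N + 1)) * B q N n =
        (1 + q ^ (a + b + 1)) * (1 - q ^ (a + 1)) * (1 - q ^ (b + 1)) * D := by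
      rw [B_eq hn, ← ha, ← hb, show 2 * N = a + b by omega, hD]
      field_simp
    have t2 : q ^ ((N : ℤ) + 1 - n) * B q N (n - 1) =
        q ^ (b + 1) * ((1 - q ^ a) * (1 - q ^ (a + 1))) * D := by
      rw [hz1]
      rcases Nat.eq_zero_or_pos a with h0 | hpos
      · rw [B_eq_zero (by omega), h0]
        simp
      · have nza' := Q_ne_zero hq (a - 1)
        have hQA : Q q a = Q q (a - 1) * (1 - q ^ a) := by
          obtain ⟨k, hk⟩ : ∃ k, a = k + 1 := ⟨a - 1, by omega⟩
          rw [hk, Q_succ' q k]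
          simp only [Nat.add_sub_cancel]
        have hNA : (1 : ℂ) - q ^ a ≠ 0 := one_sub_pow_ne hq hpos
        rw [B_eq (by omega), show ((N : ℤ) + (n - 1)).toNat = a - 1 by omega,
          show ((N : ℤ) - (n - 1)).toNat = b + 1 by omega,
          show 2 * N = a + b by omega, hQb1, hD, hQA]
        field_simp
    have t3 : q ^ ((N : ℤ) + 1 + n) * B q N (n + 1) =
        q ^ (a + 1) * ((1 - q ^ b) * (1 - q ^ (b + 1))) * D := by
      rw [hz2]
      rcases Nat.eq_zero_or_pos b with h0 | hpos
      · rw [B_eq_zero (by omega), h0]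
        simp
      · have nzb' := Q_ne_zero hq (b - 1)
        have hQB : Q q b = Q q (b - 1) * (1 - q ^ b) := by
          obtain ⟨k, hk⟩ : ∃ k, b = k + 1 := ⟨b - 1, by omega⟩
          rw [hk, Q_succ' q k]
          simp only [Nat.add_sub_cancel]
        have hNB : (1 : ℂ) - q ^ b ≠ 0 := one_sub_pow_ne hq hpos
        rw [B_eq (by omega), show ((N : ℤ) + (n + 1)).toNat = a + 1 by omega,
          show ((N : ℤ) - (n + 1)).toNat = b - 1 by omega,
          show 2 * N = a + b by omega, hQa1, hD, hQB]
        field_simp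
    rw [lhs_eq, t1, t2, t3]
    linear_combination (key_identity (q := q) a b) * D
  · -- |n| = N + 1
    have h2 : n = (N : ℤ) + 1 ∨ n = -((N : ℤ) + 1) := by omega
    rcases h2 with rfl | rfl
    · rw [B_top_int hq (N := N + 1) (by push_cast; ring),
        B_top_int hq (N := N) (n := (N : ℤ) + 1 - 1) (by ring),
        B_eq_zero (by omega), B_eq_zero (by omega),
        show (N : ℤ) + 1 - ((N : ℤ) + 1) = 0 by ring, zpow_zero]
      ring
    · rw [B_bot_int hq (N := N + 1) (by push_cast; ring),
        B_bot_int hq (N := N) (n := -((N : ℤ) + 1) + 1) (by ring),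
        B_eq_zero (by omega), B_eq_zero (by omega),
        show (N : ℤ) + 1 + -((N : ℤ) + 1) = 0 by ring, zpow_zero]
      ring
  · -- |n| > N + 1 : everything is 0
    rw [B_eq_zero (by omega), B_eq_zero (by omega), B_eq_zero (by omega),
      B_eq_zero (by omega)]
    ring



noncomputable def c (q z : ℂ) (n : ℤ) : ℂ := (-1) ^ n * q ^ ((n * (n - 1)) / 2) * z ^ n

lemma c_zero : c q z 0 = 1 := by simp [c]

lemma exp_step (n : ℤ) : ((n + 1) * (n + 1 - 1)) / 2 = (n * (n - 1)) / 2 + n := by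
  obtain ⟨k, hk⟩ := Int.even_mul_succ_self (n - 1)
  have e1 : (n + 1) * (n + 1 - 1) = n * (n - 1) + 2 * n := by ring
  have e2 : n * (n - 1) = 2 * k := by linear_combination hk
  omega

lemma c_rec (hz : z ≠ 0) (hq0 : q ≠ 0) (n : ℤ) :
    c q z (n + 1) = -(q ^ n * z) * c q z n := by
  unfold c
  rw [exp_step, zpow_add₀ hq0, zpow_add₀ (by norm_num : (-1 : ℂ) ≠ 0) n 1,
    zpow_add₀ hz n 1, zpow_one, zpow_one]
  ring

lemma c_shift1 (hz : z ≠ 0) (hq0 : q ≠ 0) (N : ℕ) (n : ℤ) :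
    q ^ ((N : ℤ) - n) * c q z (n + 1) = -(z * q ^ (N : ℤ)) * c q z n := by
  have e : q ^ ((N : ℤ) - n) * q ^ n = q ^ (N : ℤ) := by
    rw [← zpow_add₀ hq0]; ring_nf
  rw [c_rec hz hq0 n]
  linear_combination (-(z * c q z n)) * e

lemma c_shift2 (hz : z ≠ 0) (hq0 : q ≠ 0) (N : ℕ) (n : ℤ) :
    q ^ ((N : ℤ) + n) * c q z (n - 1) = -(q ^ ((N : ℤ) + 1)) * c q z n / z := by
  have h := c_rec hz hq0 (n - 1)
  rw [sub_add_cancel] at h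
  have e : q ^ ((N : ℤ) + 1) * q ^ (n - 1) = q ^ ((N : ℤ) + n) := by
    rw [← zpow_add₀ hq0]; ring_nf
  rw [h, eq_div_iff hz]
  linear_combination (-(z * c q z (n - 1))) * e



/-- the finite Jacobi triple product -/
lemma finJTP (hz : z ≠ 0) (hq0 : q ≠ 0) (hq : ‖q‖ < 1) (N : ℕ) :
    (∏ k ∈ range N, (1 - z * q ^ k)) * (∏ k ∈ range N, (1 - (q / z) * q ^ k)) =
      ∑ n ∈ Icc (-(N : ℤ)) (N : ℤ), B q N n * c q z n := by
  induction N with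
  | zero =>
      simp only [range_zero, prod_empty, one_mul, Nat.cast_zero, neg_zero, Icc_self,
        sum_singleton]
      rw [B_top_int hq (by simp), c_zero, mul_one]
  | succ N ih =>
      set S : ℂ := ∑ n ∈ Icc (-(N : ℤ)) (N : ℤ), B q N n * c q z n with hSdef
      have hS : ∑ n ∈ Icc (-((N : ℤ) + 1)) ((N : ℤ) + 1), B q N n * c q z n = S := by
        rw [hSdef]
        symm
        apply sum_subset
        · intro x hx; simp only [mem_Icc] at *; omega
        · intro x hx hx'
          simp only [mem_Icc] at hx hx'
          rw [B_eq_zero (by omega), zero_mul]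
      have E2 : ∑ n ∈ Icc (-((N : ℤ) + 1)) ((N : ℤ) + 1),
          q ^ ((N : ℤ) + 1 - n) * B q N (n - 1) * c q z n = -(z * q ^ (N : ℤ)) * S := by
        have step1 : ∑ n ∈ Icc (-((N : ℤ) + 1)) ((N : ℤ) + 1),
            q ^ ((N : ℤ) + 1 - n) * B q N (n - 1) * c q z n
            = ∑ n ∈ Icc (-(N : ℤ) + 1) ((N : ℤ) + 1),
              q ^ ((N : ℤ) + 1 - n) * B q N (n - 1) * c q z n := by
          symm
          apply sum_subset
          · intro x hx; simp only [mem_Icc] at *; omega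
          · intro x hx hx'
            simp only [mem_Icc] at hx hx'
            rw [B_eq_zero (by omega), mul_zero, zero_mul]
        have step2 : Icc (-(N : ℤ) + 1) ((N : ℤ) + 1)
            = (Icc (-(N : ℤ)) (N : ℤ)).map (addRightEmbedding 1) := by
          rw [Finset.map_add_right_Icc]
        rw [step1, step2, Finset.sum_map]
        rw [Finset.mul_sum]
        apply sum_congr rfl
        intro n _
        simp only [addRightEmbedding_apply, add_sub_cancel_right]
        rw [show (N : ℤ) + 1 - (n + 1) = (N : ℤ) - n by ring]
        rw [show q ^ ((N : ℤ) - n) * B q N n * c q z (n + 1)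
            = B q N n * (q ^ ((N : ℤ) - n) * c q z (n + 1)) by ring,
          c_shift1 hz hq0]
        ring
      have E3 : ∑ n ∈ Icc (-((N : ℤ) + 1)) ((N : ℤ) + 1),
          q ^ ((N : ℤ) + 1 + n) * B q N (n + 1) * c q z n
          = -(q ^ ((N : ℤ) + 1)) / z * S := by
        have step1 : ∑ n ∈ Icc (-((N : ℤ) + 1)) ((N : ℤ) + 1),
            q ^ ((N : ℤ) + 1 + n) * B q N (n + 1) * c q z n
            = ∑ n ∈ Icc (-((N : ℤ) + 1)) ((N : ℤ) - 1),
              q ^ ((N : ℤ) + 1 + n) * B q N (n + 1) * c q z n := by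
          symm
          apply sum_subset
          · intro x hx; simp only [mem_Icc] at *; omega
          · intro x hx hx'
            simp only [mem_Icc] at hx hx'
            rw [B_eq_zero (by omega), mul_zero, zero_mul]
        have step2 : Icc (-((N : ℤ) + 1)) ((N : ℤ) - 1)
            = (Icc (-(N : ℤ)) (N : ℤ)).map (addRightEmbedding (-1)) := by
          rw [Finset.map_add_right_Icc]
          congr 1 <;> ring
        rw [step1, step2, Finset.sum_map]
        rw [Finset.mul_sum]
        apply sum_congr rfl
        intro n _
        simp only [addRightEmbedding_apply]
        rw [show n + -1 + 1 = n by ring, show (N : ℤ) + 1 + (n + -1) = (N : ℤ) + n by ring,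
          show n + -1 = n - 1 by ring]
        rw [show q ^ ((N : ℤ) + n) * B q N n * c q z (n - 1)
            = B q N n * (q ^ ((N : ℤ) + n) * c q z (n - 1)) by ring,
          c_shift2 hz hq0]
        ring
      have main : ∑ n ∈ Icc (-((N : ℤ) + 1)) ((N : ℤ) + 1), B q (N + 1) n * c q z n
          = (1 + q ^ (2 * N + 1)) * S + -(z * q ^ (N : ℤ)) * S
            + -(q ^ ((N : ℤ) + 1)) / z * S := by
        rw [← E2, ← E3, ← hS, Finset.mul_sum, ← sum_add_distrib, ← sum_add_distrib]
        apply sum_congr rfl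
        intro n _
        rw [B_rec hq0 hq N n]
        ring
      rw [prod_range_succ, prod_range_succ,
        show (∏ k ∈ range N, (1 - z * q ^ k)) * (1 - z * q ^ N)
            * ((∏ k ∈ range N, (1 - (q / z) * q ^ k)) * (1 - (q / z) * q ^ N))
          = (∏ k ∈ range N, (1 - z * q ^ k)) * (∏ k ∈ range N, (1 - (q / z) * q ^ k))
            * ((1 - z * q ^ N) * (1 - (q / z) * q ^ N)) by ring,
        ih]
      rw [show ((N + 1 : ℕ) : ℤ) = (N : ℤ) + 1 by push_cast; ring,
        show (-(((N : ℤ)) + 1)) = -((N : ℤ) + 1) by ring]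
      rw [main]
      have hq1 : q ^ ((N : ℤ)) = q ^ (N : ℕ) := zpow_natCast q N
      have hq2 : q ^ ((N : ℤ) + 1) = q ^ ((N : ℕ) + 1) := by
        rw [show ((N : ℤ) + 1) = ((N + 1 : ℕ) : ℤ) by push_cast; ring, zpow_natCast]
      rw [hq1, hq2]
      field_simp
      ring


/-- multipliability of the products -/
lemma mult_aux (hq : ‖q‖ < 1) (w : ℂ) :
    Multipliable (fun k : ℕ => 1 - w * q ^ k) := by
  by_cases hzero : ∃ k₀ : ℕ, 1 - w * q ^ k₀ = 0
  · obtain ⟨k₀, hk₀⟩ := hzero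
    refine ⟨0, ?_⟩
    have hev : ∀ᶠ s : Finset ℕ in atTop, ∏ i ∈ s, (1 - w * q ^ i) = 0 := by
      filter_upwards [eventually_ge_atTop ({k₀} : Finset ℕ)] with s hs
      exact Finset.prod_eq_zero (hs (Finset.mem_singleton_self k₀)) hk₀
    exact Tendsto.congr' (by filter_upwards [hev] with s hs using hs.symm) tendsto_const_nhds
  · push_neg at hzero
    apply Complex.multipliable_of_summable_log
    have hsum : Summable (fun k : ℕ => 3 / 2 * (‖w‖ * ‖q‖ ^ k)) := by
      apply Summable.mul_left
      exact (summable_geometric_of_lt_one (norm_nonneg q) hq).mul_left _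
    apply Summable.of_norm_bounded_eventually_nat hsum
    have htend : Tendsto (fun k : ℕ => ‖w‖ * ‖q‖ ^ k) atTop (𝓝 0) := by
      simpa using (tendsto_pow_atTop_nhds_zero_of_lt_one (norm_nonneg q) hq).const_mul
        (‖w‖)
    filter_upwards [htend.eventually_le_const (by norm_num : (0:ℝ) < 1/2)] with k hk
    have h1 : ‖-(w * q ^ k)‖ ≤ 1 / 2 := by
      rw [norm_neg]
      simpa [norm_mul, norm_pow] using hk
    have := Complex.norm_log_one_add_half_le_self h1
    rw [show (1 : ℂ) + -(w * q ^ k) = 1 - w * q ^ k by ring] at this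
    refine this.trans ?_
    rw [norm_neg]
    simp [norm_mul, norm_pow]


lemma partial_geom (r : ℝ) (h0 : 0 ≤ r) (h1 : r < 1) (m : ℕ) :
    ∑ j ∈ range m, r ^ (j + 1) ≤ r / (1 - r) := by
  have h2 : ∑ j ∈ range m, r ^ (j + 1) = r * ∑ j ∈ range m, r ^ j := by
    rw [Finset.mul_sum]; exact Finset.sum_congr rfl fun j _ => by ring
  rw [h2, div_eq_mul_inv]
  apply mul_le_mul_of_nonneg_left _ h0
  calc ∑ j ∈ range m, r ^ j ≤ ∑' j : ℕ, r ^ j :=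
        Summable.sum_le_tsum _ (fun j _ => pow_nonneg h0 j)
          (summable_geometric_of_lt_one h0 h1)
    _ = (1 - r)⁻¹ := tsum_geometric_of_lt_one h0 h1

lemma Q_abs_le (hq : ‖q‖ < 1) (m : ℕ) :
    ‖Q q m‖ ≤ Real.exp (‖q‖ / (1 - ‖q‖)) := by
  set r := ‖q‖ with hr
  have h0 : 0 ≤ r := norm_nonneg q
  calc ‖Q q m‖ = ∏ j ∈ range m, ‖1 - q * q ^ j‖ := by
        rw [Q, norm_prod]
    _ ≤ ∏ j ∈ range m, Real.exp (r ^ (j + 1)) := by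
        apply Finset.prod_le_prod (fun j _ => norm_nonneg _)
        intro j _
        have habs : ‖q * q ^ j‖ = r ^ (j + 1) := by
          rw [norm_mul, norm_pow, pow_succ]; ring
        calc ‖1 - q * q ^ j‖ ≤ ‖(1 : ℂ)‖ + ‖q * q ^ j‖ := by
              exact norm_sub_le (1 : ℂ) (q * q ^ j)
          _ = r ^ (j + 1) + 1 := by rw [habs, norm_one]; ring
          _ ≤ Real.exp (r ^ (j + 1)) := Real.add_one_le_exp _
    _ = Real.exp (∑ j ∈ range m, r ^ (j + 1)) := by rw [← Real.exp_sum]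
    _ ≤ Real.exp (r / (1 - r)) := Real.exp_le_exp.2 (partial_geom r h0 hq m)



lemma one_sub_le_exp_aux {r x : ℝ} (h0 : 0 ≤ x) (hxr : x ≤ r) (hr1 : r < 1) :
    Real.exp (-(x / (1 - r))) ≤ 1 - x := by
  have h1r : 0 < 1 - r := by linarith
  have h1x : 0 < 1 - x := by linarith
  have key : 1 / (1 - x) ≤ Real.exp (x / (1 - r)) := by
    have k1 : 1 + x / (1 - r) ≤ Real.exp (x / (1 - r)) := by
      have := Real.add_one_le_exp (x / (1 - r))
      linarith
    refine le_trans ?_ k1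
    rw [div_le_iff₀ h1x]
    have expand : (1 + x / (1 - r)) * (1 - x) = 1 + x * (r - x) / (1 - r) := by
      field_simp
      ring
    rw [expand]
    have : 0 ≤ x * (r - x) / (1 - r) := by
      apply div_nonneg _ h1r.le
      exact mul_nonneg h0 (by linarith)
    linarith
  rw [Real.exp_neg]
  rw [inv_le_comm₀ (Real.exp_pos _) h1x] at *
  calc (1 - x)⁻¹ = 1 / (1 - x) := (one_div _).symm
    _ ≤ Real.exp (x / (1 - r)) := key

lemma Q_abs_ge (hq : ‖q‖ < 1) (m : ℕ) :
    Real.exp (-(‖q‖ / ((1 - ‖q‖) * (1 - ‖q‖))))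
      ≤ ‖Q q m‖ := by
  set r := ‖q‖ with hr
  have h0 : 0 ≤ r := norm_nonneg q
  have h1r : 0 < 1 - r := by linarith
  have hpow : ∀ j : ℕ, r ^ (j + 1) ≤ r := fun j =>
    pow_le_of_le_one h0 hq.le (Nat.succ_ne_zero j)
  have hpow1 : ∀ j : ℕ, 0 ≤ 1 - r ^ (j + 1) := fun j => by
    have := hpow j; linarith
  calc Real.exp (-(r / ((1 - r) * (1 - r))))
      ≤ Real.exp (-((∑ j ∈ range m, r ^ (j + 1)) / (1 - r))) := by
        apply Real.exp_le_exp.2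
        apply neg_le_neg
        rw [div_le_div_iff₀ h1r (by positivity)]
        have := partial_geom r h0 hq m
        calc (∑ j ∈ range m, r ^ (j + 1)) * ((1 - r) * (1 - r))
            = ((∑ j ∈ range m, r ^ (j + 1)) * (1 - r)) * (1 - r) := by ring
          _ ≤ (r / (1 - r) * (1 - r)) * (1 - r) := by
              apply mul_le_mul_of_nonneg_right _ h1r.le
              apply mul_le_mul_of_nonneg_right this h1r.le
          _ = r * (1 - r) := by field_simp
    _ = ∏ j ∈ range m, Real.exp (-(r ^ (j + 1) / (1 - r))) := by
        rw [← Real.exp_sum]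
        congr 1
        rw [eq_comm]
        simp only [neg_div, Finset.sum_neg_distrib, Finset.sum_div]
    _ ≤ ∏ j ∈ range m, (1 - r ^ (j + 1)) := by
        apply Finset.prod_le_prod (fun j _ => (Real.exp_pos _).le)
        exact fun j _ => one_sub_le_exp_aux (pow_nonneg h0 _) (hpow j) hq
    _ ≤ ∏ j ∈ range m, ‖1 - q * q ^ j‖ := by
        apply Finset.prod_le_prod (fun j _ => hpow1 j)
        intro j _
        have : ‖q * q ^ j‖ = r ^ (j + 1) := by
          rw [norm_mul, norm_pow, pow_succ]; ring
        calc 1 - r ^ (j + 1) = ‖(1 : ℂ)‖ - ‖q * q ^ j‖ := by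
              rw [norm_one, this]
          _ ≤ ‖1 - q * q ^ j‖ := norm_sub_norm_le _ _
          _ = ‖1 - q * q ^ j‖ := rfl
    _ = ‖Q q m‖ := by rw [Q, norm_prod]




lemma c_norm_summable (hz : z ≠ 0) (hq0 : q ≠ 0) (hq : ‖q‖ < 1) :
    Summable (fun n : ℤ => ‖c q z n‖) := by
  have hq' : ‖q‖ < 1 := hq
  have h0q : (0:ℝ) < ‖q‖ := norm_pos_iff.2 hq0
  have h0z : (0:ℝ) < ‖z‖ := norm_pos_iff.2 hz
  apply Summable.of_nat_of_neg
  · apply summable_of_ratio_norm_eventually_le (r := 1/2) (by norm_num)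
    have htend : Tendsto (fun m : ℕ => ‖q‖ ^ m * ‖z‖) atTop (𝓝 0) := by
      simpa using (tendsto_pow_atTop_nhds_zero_of_lt_one (norm_nonneg q) hq').mul_const ‖z‖
    filter_upwards [htend.eventually_le_const (by norm_num : (0:ℝ) < 1/2)] with m hm
    have hrec : c q z ((m : ℤ) + 1) = -(q ^ (m : ℤ) * z) * c q z (m : ℤ) := c_rec hz hq0 _
    have hcast : (((m + 1 : ℕ)) : ℤ) = (m : ℤ) + 1 := by push_cast; ring
    rw [Real.norm_of_nonneg (norm_nonneg _), Real.norm_of_nonneg (norm_nonneg _),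
      hcast, hrec, norm_mul, norm_neg, norm_mul, norm_zpow, zpow_natCast]
    calc ‖q‖ ^ m * ‖z‖ * ‖c q z (m : ℤ)‖ ≤ 1/2 * ‖c q z (m : ℤ)‖ :=
      mul_le_mul_of_nonneg_right hm (norm_nonneg _)
      _ = 1/2 * ‖c q z (m : ℤ)‖ := rfl
  · apply summable_of_ratio_norm_eventually_le (r := 1/2) (by norm_num)
    have htend : Tendsto (fun m : ℕ => ‖q‖ ^ (m + 1) / ‖z‖) atTop (𝓝 0) := by
      have : Tendsto (fun m : ℕ => ‖q‖ ^ (m + 1)) atTop (𝓝 0) :=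
        (tendsto_pow_atTop_nhds_zero_of_lt_one (norm_nonneg q) hq').comp
          (tendsto_add_atTop_nat 1)
      simpa using this.div_const ‖z‖
    filter_upwards [htend.eventually_le_const (by norm_num : (0:ℝ) < 1/2)] with m hm
    have hrec : c q z (-(m : ℤ) - 1 + 1) = -(q ^ (-(m : ℤ) - 1) * z) * c q z (-(m : ℤ) - 1) :=
      c_rec hz hq0 _
    have hl : ‖c q z (-(m : ℤ))‖ = ‖q‖ ^ (-(m : ℤ) - 1) * ‖z‖ * ‖c q z (-(m : ℤ) - 1)‖ := by
      conv_lhs => rw [show -(m : ℤ) = -(m : ℤ) - 1 + 1 by ring, hrec]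
      rw [norm_mul, norm_neg, norm_mul, norm_zpow]
    have key : ‖c q z (-(m : ℤ) - 1)‖ = ‖q‖ ^ (m + 1) / ‖z‖ * ‖c q z (-(m : ℤ))‖ := by
      rw [hl]
      have : ‖q‖ ^ (-(m : ℤ) - 1) = (‖q‖ ^ (m + 1))⁻¹ := by
        rw [show -(m : ℤ) - 1 = -((m : ℤ) + 1) by ring, zpow_neg]
        norm_cast
      rw [this]
      have hQ : (‖q‖:ℝ) ^ (m+1) ≠ 0 := by positivity
      rw [show ‖q‖ ^ (m+1) / ‖z‖ * ((‖q‖ ^ (m+1))⁻¹ * ‖z‖ * ‖c q z (-(m:ℤ) - 1)‖)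
        = (‖q‖ ^ (m+1) * (‖q‖ ^ (m+1))⁻¹) * (‖z‖ / ‖z‖) * ‖c q z (-(m:ℤ) - 1)‖ by ring,
        mul_inv_cancel₀ hQ, div_self (ne_of_gt h0z), one_mul, one_mul]
    have hcast : ((-((m + 1 : ℕ) : ℤ))) = -(m : ℤ) - 1 := by push_cast; ring
    rw [Real.norm_of_nonneg (norm_nonneg _), Real.norm_of_nonneg (norm_nonneg _),
      hcast, key]
    exact mul_le_mul_of_nonneg_right hm (norm_nonneg _)



theorem main (hz : z ≠ 0) (hq0 : q ≠ 0) (hq : ‖q‖ < 1) :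
    (∏' k : ℕ, (1 - z * q ^ k)) * (∏' k : ℕ, (1 - (q / z) * q ^ k)) *
      (∏' k : ℕ, (1 - q * q ^ k)) = ∑' n : ℤ, c q z n := by
  set r := ‖q‖ with hr
  set Qinf : ℂ := ∏' k : ℕ, (1 - q * q ^ k) with hQinf
  have m1 := mult_aux hq z
  have m2 := mult_aux hq (q / z)
  have m3 := mult_aux hq q
  have hQtends : Tendsto (fun m => Q q m) atTop (𝓝 Qinf) := Multipliable.tendsto_prod_tprod_nat m3
  set c0 : ℝ := Real.exp (-(r / ((1 - r) * (1 - r)))) with hc0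
  set C1 : ℝ := Real.exp (r / (1 - r)) with hC1
  have hc0pos : 0 < c0 := Real.exp_pos _
  have hQlb : ∀ m, c0 ≤ ‖Q q m‖ := fun m => Q_abs_ge hq m
  have hQub : ∀ m, ‖Q q m‖ ≤ C1 := fun m => Q_abs_le hq m
  have hQinf_lb : c0 ≤ ‖Qinf‖ :=
    ge_of_tendsto hQtends.norm (Eventually.of_forall hQlb)
  have hQinf_ne : Qinf ≠ 0 := by
    intro h
    rw [h, norm_zero] at hQinf_lb
    linarith
  have t2N : Tendsto (fun N : ℕ => 2 * N) atTop atTop :=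
    tendsto_atTop_atTop.2 (fun b => ⟨b, fun a ha => by omega⟩)
  have T3 : Tendsto (fun N => Q q (2 * N)) atTop (𝓝 Qinf) := hQtends.comp t2N
  set D : ℕ → ℤ → ℂ := fun N n => Q q (2 * N) * B q N n with hD
  have hDlim : ∀ n : ℤ, Tendsto (fun N => D N n) atTop (𝓝 1) := by
    intro n
    have ta : Tendsto (fun N : ℕ => ((N : ℤ) + n).toNat) atTop atTop :=
      tendsto_atTop_atTop.2 (fun b => ⟨b + n.natAbs, fun a ha => by omega⟩)
    have tb : Tendsto (fun N : ℕ => ((N : ℤ) - n).toNat) atTop atTop :=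
      tendsto_atTop_atTop.2 (fun b => ⟨b + n.natAbs, fun a ha => by omega⟩)
    have TA : Tendsto (fun N : ℕ => Q q ((N : ℤ) + n).toNat) atTop (𝓝 Qinf) := hQtends.comp ta
    have TB : Tendsto (fun N : ℕ => Q q ((N : ℤ) - n).toNat) atTop (𝓝 Qinf) := hQtends.comp tb
    have hne : Qinf * Qinf ≠ 0 := mul_ne_zero hQinf_ne hQinf_ne
    have G : Tendsto (fun N : ℕ => Q q (2 * N) * Q q (2 * N)
        / (Q q ((N : ℤ) + n).toNat * Q q ((N : ℤ) - n).toNat)) atTop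
        (𝓝 (Qinf * Qinf / (Qinf * Qinf))) := (T3.mul T3).div (TA.mul TB) hne
    rw [div_self hne] at G
    apply G.congr'
    filter_upwards [eventually_ge_atTop n.natAbs] with N hN
    rw [hD]
    simp only
    rw [B_eq hN, mul_div_assoc']
  have hbound_nonneg : 0 ≤ C1 * C1 / (c0 * c0) := by positivity
  have hDbound : ∀ (N : ℕ) (n : ℤ), ‖D N n * c q z n‖ ≤ C1 * C1 / (c0 * c0) * ‖c q z n‖ := by
    intro N n
    rw [norm_mul]
    apply mul_le_mul_of_nonneg_right _ (norm_nonneg _)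
    by_cases hN : n.natAbs ≤ N
    · rw [hD]
      simp only
      rw [B_eq hN, mul_div_assoc', norm_div, norm_mul, norm_mul]
      apply div_le_div₀ (by positivity)
        (mul_le_mul (hQub _) (hQub _) (norm_nonneg _) (Real.exp_pos _).le)
        (by positivity)
        (mul_le_mul (hQlb _) (hQlb _) hc0pos.le (norm_nonneg _))
    · rw [hD]
      simp only
      rw [B_eq_zero (by omega), mul_zero, norm_zero]
      exact hbound_nonneg
  have hdom : Tendsto (fun N => ∑' n : ℤ, D N n * c q z n) atTop
      (𝓝 (∑' n : ℤ, c q z n)) := by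
    apply tendsto_tsum_of_dominated_convergence
      ((c_norm_summable hz hq0 hq).mul_left (C1 * C1 / (c0 * c0)))
      (fun n => by simpa using (hDlim n).mul_const (c q z n))
      (Eventually.of_forall (fun N n => hDbound N n))
  have hts : ∀ N : ℕ, (∑' n : ℤ, D N n * c q z n)
      = ∑ n ∈ Icc (-(N : ℤ)) (N : ℤ), D N n * c q z n := by
    intro N
    apply tsum_eq_sum
    intro n hn
    simp only [mem_Icc] at hn
    rw [hD]
    simp only
    rw [B_eq_zero (by omega), mul_zero, zero_mul]
  have hL : Tendsto (fun N => (∏ k ∈ range N, (1 - z * q ^ k))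
      * (∏ k ∈ range N, (1 - (q / z) * q ^ k)) * Q q (2 * N)) atTop
      (𝓝 ((∏' k : ℕ, (1 - z * q ^ k)) * (∏' k : ℕ, (1 - (q / z) * q ^ k)) * Qinf)) :=
    ((Multipliable.tendsto_prod_tprod_nat m1).mul
      (Multipliable.tendsto_prod_tprod_nat m2)).mul T3
  have heq : ∀ N : ℕ, (∏ k ∈ range N, (1 - z * q ^ k))
      * (∏ k ∈ range N, (1 - (q / z) * q ^ k)) * Q q (2 * N)
      = ∑' n : ℤ, D N n * c q z n := by
    intro N
    rw [hts N, finJTP hz hq0 hq N, Finset.sum_mul]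
    apply sum_congr rfl
    intro n _
    rw [hD]
    simp only
    ring
  exact tendsto_nhds_unique (hL.congr heq) hdom



end JTP

theorem jacobi_triple_product (z q : ℂ) (hz : z ≠ 0) (hq0 : q ≠ 0)
    (hq : ‖q‖ < 1) :
    (∏' k : ℕ, (1 - z * q ^ k)) * (∏' k : ℕ, (1 - (q / z) * q ^ k)) *
        (∏' k : ℕ, (1 - q * q ^ k)) =
      ∑' n : ℤ, (-1) ^ n * q ^ ((n * (n - 1)) / 2) * z ^ n := by
  simpa only [JTP.c] using JTP.main hz hq0 hq
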